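/- Let n, N, K be positive integers. Let y_1, …, y_N ∈ ℂ^n \ {0} be a frame for ℂ^n with lower frame bound A_N and upper frame bound B_N, let z_1, …, z_K ∈ ℂ^n \ {0}, and suppose there exists k₀ ∈ {1, …, K} such that m_z := min_{1 ≤ i ≤ n} |z_{k₀}(i)| > 0. Define x_{j,k} := y_j ⊙ z_k for 1 ≤ j ≤ N, 1 ≤ k ≤ K. Then for every x ∈ ℂ^n, m_z²·A_N·‖x‖² ≤ Σ_{j=1}^N Σ_{k=1}^K |⟨x, x_{j,k}⟩|² ≤ K·B_N·(max_{1 ≤ k ≤ K} ‖z_k‖_∞²)·‖x‖². In particular, X = {x_{j,k} : 1 ≤ j ≤ N, 1 ≤ k ≤ K} is a multiplicative frame for ℂ^n. -/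

import Mathlib

/-- Theorem (A construction of multiplicative frames, part a):
If `y₁, …, y_N ∈ ℂⁿ \ {0}` is a frame for `ℂⁿ` with lower frame bound `A_N` and
upper frame bound `B_N`, `z₁, …, z_K ∈ ℂⁿ \ {0}`, and some `z_{k₀}` has all
coordinates of modulus at least `m_z > 0`, then the pointwise products
`X j k = y j ⊙ z k` satisfy, for every `x ∈ ℂⁿ`,
`m_z² A_N ‖x‖² ≤ Σ_{j,k} |⟨x, X j k⟩|² ≤ K B_N (max_k ‖z k‖_∞²) ‖x‖²`;
in particular `X` is a (multiplicative) frame, i.e. it spans `ℂⁿ`. -/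
theorem multiplicative_frame_construction_a
    (n N K : ℕ) (hn : 0 < n) (hN : 0 < N) (hK : 0 < K)
    (y : Fin N → EuclideanSpace ℂ (Fin n))
    (z : Fin K → EuclideanSpace ℂ (Fin n))
    (hy0 : ∀ j, y j ≠ 0) (hz0 : ∀ k, z k ≠ 0)
    (AN BN : ℝ) (hAN : 0 < AN) (hBN : 0 < BN)
    (hframe : ∀ x : EuclideanSpace ℂ (Fin n),
      AN * ‖x‖ ^ 2 ≤ ∑ j, ‖(inner ℂ x (y j) : ℂ)‖ ^ 2 ∧
      ∑ j, ‖(inner ℂ x (y j) : ℂ)‖ ^ 2 ≤ BN * ‖x‖ ^ 2)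
    (k₀ : Fin K) (mz : ℝ) (hmz : mz = ⨅ i : Fin n, ‖z k₀ i‖) (hmzpos : 0 < mz)
    (X : Fin N → Fin K → EuclideanSpace ℂ (Fin n))
    (hX : ∀ j k i, X j k i = y j i * z k i) :
    (∀ x : EuclideanSpace ℂ (Fin n),
      mz ^ 2 * AN * ‖x‖ ^ 2 ≤ ∑ j, ∑ k, ‖(inner ℂ x (X j k) : ℂ)‖ ^ 2 ∧
      ∑ j, ∑ k, ‖(inner ℂ x (X j k) : ℂ)‖ ^ 2 ≤
        (K : ℝ) * BN * (⨆ k : Fin K, (⨆ i : Fin n, ‖z k i‖) ^ 2) * ‖x‖ ^ 2) ∧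
    Submodule.span ℂ (Set.range fun p : Fin N × Fin K => X p.1 p.2) = ⊤ := by
  have hnn : Nonempty (Fin n) := ⟨⟨0, hn⟩⟩
  have hnK : Nonempty (Fin K) := ⟨⟨0, hK⟩⟩
  -- the auxiliary vectors
  set w : Fin K → EuclideanSpace ℂ (Fin n) → EuclideanSpace ℂ (Fin n) :=
    fun k x => WithLp.toLp 2 (fun i => x i * (starRingEnd ℂ) (z k i)) with hw
  have normsq : ∀ v : EuclideanSpace ℂ (Fin n), ‖v‖ ^ 2 = ∑ i, ‖v i‖ ^ 2 := by
    intro v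
    rw [EuclideanSpace.norm_eq, Real.sq_sqrt]
    positivity
  have hinner : ∀ (x : EuclideanSpace ℂ (Fin n)) (j k),
      (inner ℂ x (X j k) : ℂ) = inner ℂ (w k x) (y j) := by
    intro x j k
    simp only [PiLp.inner_apply, RCLike.inner_apply, hX, hw, PiLp.toLp_apply]
    refine Finset.sum_congr rfl fun i _ => ?_
    simp only [map_mul, RingHomCompTriple.comp_apply, RingHom.id_apply, RCLike.conj_conj]
    ring
  set S : ℝ := ⨆ k : Fin K, (⨆ i : Fin n, ‖z k i‖) ^ 2 with hS
  -- norm bounds on w k x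
  have hwub : ∀ (x : EuclideanSpace ℂ (Fin n)) (k), ‖w k x‖ ^ 2 ≤ S * ‖x‖ ^ 2 := by
    intro x k
    have hzS : ∀ i, ‖z k i‖ ^ 2 ≤ S := by
      intro i
      have h1 : ‖z k i‖ ≤ ⨆ i : Fin n, ‖z k i‖ :=
        le_ciSup (f := fun i => ‖z k i‖) (Set.Finite.bddAbove (Set.finite_range _)) i
      have h2 : ‖z k i‖ ^ 2 ≤ (⨆ i : Fin n, ‖z k i‖) ^ 2 := by
        apply pow_le_pow_left₀ (norm_nonneg _) h1
      exact h2.trans (le_ciSup (f := fun k => (⨆ i : Fin n, ‖z k i‖) ^ 2)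
        (Set.Finite.bddAbove (Set.finite_range _)) k)
    rw [normsq, normsq, Finset.mul_sum]
    refine Finset.sum_le_sum fun i _ => ?_
    simp only [hw, PiLp.toLp_apply, norm_mul, RCLike.norm_conj, mul_pow]
    calc ‖x i‖ ^ 2 * ‖z k i‖ ^ 2 ≤ ‖x i‖ ^ 2 * S := by
          exact mul_le_mul_of_nonneg_left (hzS i) (by positivity)
      _ = S * ‖x i‖ ^ 2 := by ring
  have hwlb : ∀ x : EuclideanSpace ℂ (Fin n), mz ^ 2 * ‖x‖ ^ 2 ≤ ‖w k₀ x‖ ^ 2 := by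
    intro x
    rw [normsq, normsq, Finset.mul_sum]
    refine Finset.sum_le_sum fun i _ => ?_
    have h1 : mz ≤ ‖z k₀ i‖ := hmz ▸ ciInf_le (Set.Finite.bddBelow (Set.finite_range _)) i
    simp only [hw, PiLp.toLp_apply, norm_mul, RCLike.norm_conj, mul_pow]
    calc mz ^ 2 * ‖x i‖ ^ 2 ≤ ‖z k₀ i‖ ^ 2 * ‖x i‖ ^ 2 := by
          exact mul_le_mul_of_nonneg_right (pow_le_pow_left₀ hmzpos.le h1 2) (by positivity)
      _ = ‖x i‖ ^ 2 * ‖z k₀ i‖ ^ 2 := by ring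
  have hSnn : 0 ≤ S := by
    refine le_ciSup_of_le (Set.Finite.bddAbove (Set.finite_range _)) k₀ (by positivity)
  have main : ∀ x : EuclideanSpace ℂ (Fin n),
      mz ^ 2 * AN * ‖x‖ ^ 2 ≤ ∑ j, ∑ k, ‖(inner ℂ x (X j k) : ℂ)‖ ^ 2 ∧
      ∑ j, ∑ k, ‖(inner ℂ x (X j k) : ℂ)‖ ^ 2 ≤ (K : ℝ) * BN * S * ‖x‖ ^ 2 := by
    intro x
    have hsum : ∑ j, ∑ k, ‖(inner ℂ x (X j k) : ℂ)‖ ^ 2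
        = ∑ k, ∑ j, ‖(inner ℂ (w k x) (y j) : ℂ)‖ ^ 2 := by
      rw [Finset.sum_comm]
      exact Finset.sum_congr rfl fun k _ => Finset.sum_congr rfl fun j _ => by rw [hinner]
    constructor
    · rw [hsum]
      calc mz ^ 2 * AN * ‖x‖ ^ 2 = AN * (mz ^ 2 * ‖x‖ ^ 2) := by ring
        _ ≤ AN * ‖w k₀ x‖ ^ 2 := by
            exact mul_le_mul_of_nonneg_left (hwlb x) hAN.le
        _ ≤ ∑ j, ‖(inner ℂ (w k₀ x) (y j) : ℂ)‖ ^ 2 := (hframe _).1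
        _ ≤ ∑ k, ∑ j, ‖(inner ℂ (w k x) (y j) : ℂ)‖ ^ 2 := by
            refine Finset.single_le_sum
              (f := fun k => ∑ j, ‖(inner ℂ (w k x) (y j) : ℂ)‖ ^ 2)
              (fun k _ => ?_) (Finset.mem_univ k₀)
            positivity
    · rw [hsum]
      calc ∑ k, ∑ j, ‖(inner ℂ (w k x) (y j) : ℂ)‖ ^ 2
          ≤ ∑ k : Fin K, BN * (S * ‖x‖ ^ 2) := by
            refine Finset.sum_le_sum fun k _ => ?_
            exact ((hframe _).2).trans (mul_le_mul_of_nonneg_left (hwub x k) hBN.le)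
        _ = (K : ℝ) * BN * S * ‖x‖ ^ 2 := by
            rw [Finset.sum_const, Finset.card_univ, Fintype.card_fin]; push_cast; ring
  refine ⟨main, ?_⟩
  -- spanning
  rw [← Submodule.orthogonal_eq_bot_iff]
  rw [Submodule.eq_bot_iff]
  intro x hx
  have hx0 : ∀ j k, (inner ℂ x (X j k) : ℂ) = 0 := by
    intro j k
    have h := (Submodule.mem_orthogonal _ x).1 hx (X j k)
      (Submodule.subset_span ⟨(j, k), rfl⟩)
    exact inner_eq_zero_symm.mp h
  have h := (main x).1
  simp only [hx0] at h
  simp only [norm_zero, ne_eq, OfNat.ofNat_ne_zero, not_false_eq_true, zero_pow,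
    Finset.sum_const_zero] at h
  have hp : 0 < mz ^ 2 * AN := by positivity
  have ht : ‖x‖ ^ 2 ≤ 0 := by
    by_contra hc
    push_neg at hc
    nlinarith [mul_pos hp hc]
  have h2 : ‖x‖ ^ 2 = 0 := le_antisymm ht (sq_nonneg _)
  have h3 : ‖x‖ = 0 := by
    have := sq_abs ‖x‖
    nlinarith [abs_nonneg ‖x‖, sq_nonneg ‖x‖, norm_nonneg x]
  exact norm_eq_zero.mp h3
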